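/- Define p_n(b) by the formal power series identity ∏_{k≥1}(1-q^k)^{b-1} = Σ_{n≥0} (q^n/n!)·p_n(b). Then the coefficient of b^t in p_n(b) equals (-1)^t · n! · Σ_{e ⊢ n} Σ_S 1/(s_1···s_t), where the outer sum is over partitions e = 1^{e_1}2^{e_2}··· of n, and the inner sum is over t-element subsets S = {s_1,...,s_t} of the multiset M_e = {1,...,e_1} ∪ {1,...,e_2} ∪ ···. -/

import Mathlib

open Polynomial PowerSeries

/-- The binomial-series expansion of `(1 - q^k)^(b-1)` as a formal power series
in `q` over `ℚ[b]` (with `b := X`): the coefficient of `q^(k·j)` is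
`(-1)^j · binom(b-1, j) = (-1)^j · (b-1)(b-2)⋯(b-j)/j!`. -/
noncomputable def etaFactor (k : ℕ) : PowerSeries (Polynomial ℚ) :=
  PowerSeries.mk fun n =>
    if k ∣ n then
      (((-1) ^ (n / k) / ((n / k).factorial : ℚ)) : ℚ) •
        (descPochhammer (Polynomial ℚ) (n / k)).eval (Polynomial.X - 1)
    else 0

/-- `hanPoly n` is the polynomial `p_n(b)` defined by the formal power series
identity `∏_{k≥1} (1-q^k)^(b-1) = Σ_{n≥0} (q^n/n!)·p_n(b)`; since factors with
`k > n` do not affect the coefficient of `q^n`, the infinite product may be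
truncated at `k = n`. -/
noncomputable def hanPoly (n : ℕ) : Polynomial ℚ :=
  (n.factorial : ℚ) •
    PowerSeries.coeff n (∏ k ∈ Finset.Icc 1 n, etaFactor k)

/-- For a partition given by its multiset of parts, the multiset
`M_e = ∪_i {1, 2, ..., e_i}` where `e_i` is the number of parts equal to `i`. -/
def Mmultiset (parts : Multiset ℕ) : Multiset ℕ :=
  parts.dedup.bind fun i => (Multiset.range (parts.count i)).map (· + 1)

/-! ### Auxiliary development -/

/-- `Qp M = ∏_{s ∈ M} (1 - X/s)`. -/
noncomputable def Qp (M : Multiset ℕ) : Polynomial ℚ :=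
  (M.map fun s : ℕ => (1 : Polynomial ℚ) - Polynomial.C ((s : ℚ))⁻¹ * Polynomial.X).prod

lemma castProd_eq (S : Multiset ℕ) :
    (S.map fun s => ((s : ℚ))⁻¹).prod = (S.map (fun s : ℕ => ((s : ℚ))⁻¹)).prod := by
  simp [Multiset.pure_def, Multiset.bind_def, Multiset.map_map]

lemma Qp_zero : Qp 0 = 1 := by simp [Qp]

lemma Qp_cons (a : ℕ) (M : Multiset ℕ) :
    Qp (a ::ₘ M) = (1 - Polynomial.C ((a : ℚ))⁻¹ * Polynomial.X) * Qp M := by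
  simp [Qp]

lemma Qp_coeff (M : Multiset ℕ) (t : ℕ) :
    (Qp M).coeff t =
      (-1) ^ t * ((M.powersetCard t).map fun S =>
        (S.map (fun s : ℕ => ((s : ℚ))⁻¹)).prod).sum := by
  induction M using Multiset.induction generalizing t with
  | empty =>
    cases t with
    | zero => simp [Qp]
    | succ t => simp [Qp, Multiset.powersetCard_zero_right, Polynomial.coeff_one]
  | cons a M ih =>
    rw [Qp_cons]
    cases t with
    | zero =>
      rw [Polynomial.mul_coeff_zero]
      simp [ih 0, Multiset.powersetCard_zero_left]
    | succ t =>
      have hL : ((1 - Polynomial.C ((a : ℚ))⁻¹ * Polynomial.X) * Qp M).coeff (t + 1)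
          = (Qp M).coeff (t + 1) - ((a : ℚ))⁻¹ * (Qp M).coeff t := by
        rw [sub_mul, one_mul, Polynomial.coeff_sub, mul_assoc,
          Polynomial.coeff_C_mul, Polynomial.coeff_X_mul]
      rw [hL, ih, ih, Multiset.powersetCard_cons, Multiset.map_add, Multiset.sum_add,
        Multiset.map_map]
      have hmap : ((Multiset.powersetCard t M).map
            ((fun S => (S.map (fun s : ℕ => ((s : ℚ))⁻¹)).prod) ∘ Multiset.cons a)).sum
          = ((a : ℚ))⁻¹ *
            ((Multiset.powersetCard t M).map fun S =>
              (S.map (fun s : ℕ => ((s : ℚ))⁻¹)).prod).sum := by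
        rw [← Multiset.sum_map_mul_left]
        congr 1
        apply Multiset.map_congr rfl
        intro S _
        simp only [Function.comp_apply, Multiset.map_cons, Multiset.prod_cons]
      rw [hmap]
      ring

lemma eta_poly (j : ℕ) :
    (((-1 : ℚ) ^ j / (j.factorial : ℚ)) : ℚ) •
        (descPochhammer (Polynomial ℚ) j).eval (Polynomial.X - 1)
      = Qp ((Multiset.range j).map (· + 1)) := by
  induction j with
  | zero => simp [Qp]
  | succ j ih =>
    have hj : ((j : ℚ) + 1) ≠ 0 := by positivity
    rw [descPochhammer_succ_right, Polynomial.eval_mul, Polynomial.eval_sub,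
      Polynomial.eval_X, Polynomial.eval_natCast, Multiset.range_succ, Multiset.map_cons,
      Qp_cons, ← ih]
    have h1 : ((-1 : ℚ)) ^ (j + 1) / ((j + 1).factorial : ℚ)
        = (-((j : ℚ) + 1)⁻¹) * ((-1 : ℚ) ^ j / (j.factorial : ℚ)) := by
      have h2 : (j.factorial : ℚ) ≠ 0 := Nat.cast_ne_zero.mpr j.factorial_ne_zero
      rw [Nat.factorial_succ]
      push_cast
      field_simp
      ring
    have hC : Polynomial.C (((j : ℚ) + 1)⁻¹) * (Polynomial.C ((j : ℚ)) + 1)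
        = (1 : Polynomial ℚ) := by
      rw [show (Polynomial.C ((j : ℚ)) + 1 : Polynomial ℚ)
          = Polynomial.C ((j : ℚ) + 1) by simp, ← Polynomial.C_mul,
        inv_mul_cancel₀ hj, Polynomial.C_1]
    have hkey : (1 : Polynomial ℚ) - Polynomial.C (((j + 1 : ℕ) : ℚ))⁻¹ * Polynomial.X
        = Polynomial.C (-((j : ℚ) + 1)⁻¹) *
            (Polynomial.X - 1 - ((j : ℕ) : Polynomial ℚ)) := by
      rw [show ((j : ℕ) : Polynomial ℚ) = Polynomial.C ((j : ℚ)) by simp, map_neg]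
      push_cast
      linear_combination -hC
    rw [hkey, Polynomial.smul_eq_C_mul, Polynomial.smul_eq_C_mul, h1, map_mul]
    ring

lemma coeff_etaFactor (k m : ℕ) :
    PowerSeries.coeff m (etaFactor k)
      = if k ∣ m then Qp ((Multiset.range (m / k)).map (· + 1)) else 0 := by
  rw [etaFactor, PowerSeries.coeff_mk]
  split
  · rw [eta_poly]
  · rfl

lemma part_mem_Icc {n : ℕ} (p : n.Partition) {i : ℕ} (hi : i ∈ p.parts) :
    i ∈ Finset.Icc 1 n := by
  rw [Finset.mem_Icc]
  refine ⟨p.parts_pos hi, ?_⟩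
  calc i ≤ p.parts.sum := Multiset.single_le_sum (fun x _ => Nat.zero_le x) i hi
  _ = n := p.parts_sum

lemma Qp_Mmultiset {n : ℕ} (p : n.Partition) :
    Qp (Mmultiset p.parts)
      = ∏ k ∈ Finset.Icc 1 n, Qp ((Multiset.range (p.parts.count k)).map (· + 1)) := by
  have h0 : Qp (Mmultiset p.parts)
      = ∏ i ∈ p.parts.toFinset, Qp ((Multiset.range (p.parts.count i)).map (· + 1)) := by
    rw [Finset.prod_eq_multiset_prod, Multiset.toFinset_val]
    simp only [Mmultiset, Qp, Multiset.map_bind, Multiset.prod_bind]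
  rw [h0]
  refine Finset.prod_subset (fun i hi => part_mem_Icc p (Multiset.mem_toFinset.mp hi)) ?_
  intro k _ hk
  rw [Multiset.count_eq_zero_of_notMem (fun h => hk (Multiset.mem_toFinset.mpr h))]
  simp [Qp]

lemma sum_count_mul (s : Multiset ℕ) : ∑ k ∈ s.toFinset, k * s.count k = s.sum := by
  calc ∑ k ∈ s.toFinset, k * s.count k
      = ∑ k ∈ s.toFinset, (s.count k • ({k} : Multiset ℕ)).sum := by
        refine Finset.sum_congr rfl fun k _ => ?_
        rw [Multiset.nsmul_singleton, Multiset.sum_replicate, smul_eq_mul, mul_comm]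
    _ = (∑ k ∈ s.toFinset, s.count k • ({k} : Multiset ℕ)).sum := (Multiset.sum_sum _ _).symm
    _ = s.sum := by rw [Multiset.toFinset_sum_count_nsmul_eq]

/-- The partition attached to a finsupp solution. -/
def partOf (n : ℕ) (l : ℕ →₀ ℕ)
    (hsum : (Finset.Icc 1 n).sum l = n)
    (hdvd : ∀ k ∈ Finset.Icc 1 n, k ∣ l k) : n.Partition where
  parts := ∑ k ∈ Finset.Icc 1 n, Multiset.replicate (l k / k) k
  parts_pos := by
    intro i hi
    rw [Multiset.mem_sum] at hi
    obtain ⟨k, hk, hik⟩ := hi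
    rw [Multiset.eq_of_mem_replicate hik]
    exact (Finset.mem_Icc.mp hk).1
  parts_sum := by
    rw [Multiset.sum_sum]
    calc ∑ k ∈ Finset.Icc 1 n, (Multiset.replicate (l k / k) k).sum
        = ∑ k ∈ Finset.Icc 1 n, l k := by
          refine Finset.sum_congr rfl fun k hk => ?_
          rw [Multiset.sum_replicate, smul_eq_mul, Nat.div_mul_cancel (hdvd k hk)]
      _ = n := hsum

lemma count_partOf (n : ℕ) (l : ℕ →₀ ℕ)
    (hsum : (Finset.Icc 1 n).sum l = n)
    (hdvd : ∀ k ∈ Finset.Icc 1 n, k ∣ l k) (k : ℕ) :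
    (partOf n l hsum hdvd).parts.count k
      = if k ∈ Finset.Icc 1 n then l k / k else 0 := by
  rw [partOf]
  rw [Multiset.count_sum']
  rw [show (∑ x ∈ Finset.Icc 1 n, Multiset.count k (Multiset.replicate (l x / x) x))
      = ∑ x ∈ Finset.Icc 1 n, if x = k then l x / x else 0 from
    Finset.sum_congr rfl fun x _ => by rw [Multiset.count_replicate]]
  rw [Finset.sum_ite_eq' (Finset.Icc 1 n) k fun x => l x / x]

/-- The finsupp attached to a partition. -/
noncomputable def fsOf (n : ℕ) (p : n.Partition) : ℕ →₀ ℕ :=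
  Finsupp.onFinset (Finset.Icc 1 n) (fun k => k * p.parts.count k)
    (fun k h => part_mem_Icc p (by
      by_contra hmem
      exact h (by simp [Multiset.count_eq_zero_of_notMem hmem])))

lemma fsOf_apply (n : ℕ) (p : n.Partition) (k : ℕ) :
    fsOf n p k = k * p.parts.count k := rfl

lemma fsOf_sum (n : ℕ) (p : n.Partition) :
    (Finset.Icc 1 n).sum ⇑(fsOf n p) = n := by
  have h1 : (Finset.Icc 1 n).sum ⇑(fsOf n p) = ∑ k ∈ p.parts.toFinset, fsOf n p k := by
    rw [eq_comm]
    refine Finset.sum_subset (fun i hi => part_mem_Icc p (Multiset.mem_toFinset.mp hi)) ?_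
    intro k _ hk
    show k * p.parts.count k = 0
    rw [Multiset.count_eq_zero_of_notMem (fun h => hk (Multiset.mem_toFinset.mpr h)), mul_zero]
  have h2 : ∑ k ∈ p.parts.toFinset, fsOf n p k
      = ∑ k ∈ p.parts.toFinset, k * p.parts.count k :=
    Finset.sum_congr rfl fun k _ => rfl
  rw [h1, h2, sum_count_mul, p.parts_sum]

lemma partOf_fsOf (n : ℕ) (p : n.Partition)
    (hsum : (Finset.Icc 1 n).sum ⇑(fsOf n p) = n)
    (hdvd : ∀ k ∈ Finset.Icc 1 n, k ∣ fsOf n p k) :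
    partOf n (fsOf n p) hsum hdvd = p := by
  refine Nat.Partition.ext ?_
  show (∑ k ∈ Finset.Icc 1 n, Multiset.replicate (fsOf n p k / k) k) = p.parts
  have h1 : ∀ k ∈ Finset.Icc 1 n,
      Multiset.replicate (fsOf n p k / k) k = Multiset.replicate (p.parts.count k) k := by
    intro k hk
    have hk0 : 0 < k := (Finset.mem_Icc.mp hk).1
    rw [fsOf_apply, Nat.mul_div_cancel_left _ hk0]
  have h2 : ∑ k ∈ p.parts.toFinset, Multiset.replicate (p.parts.count k) k
      = ∑ k ∈ Finset.Icc 1 n, Multiset.replicate (p.parts.count k) k := by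
    refine Finset.sum_subset (fun i hi => part_mem_Icc p (Multiset.mem_toFinset.mp hi)) ?_
    intro k _ hk
    rw [Multiset.count_eq_zero_of_notMem (fun h => hk (Multiset.mem_toFinset.mpr h))]
    rfl
  rw [Finset.sum_congr rfl h1, ← h2]
  calc ∑ k ∈ p.parts.toFinset, Multiset.replicate (p.parts.count k) k
      = ∑ k ∈ p.parts.toFinset, p.parts.count k • ({k} : Multiset ℕ) :=
        Finset.sum_congr rfl fun k _ => (Multiset.nsmul_singleton _ _).symm
    _ = p.parts := Multiset.toFinset_sum_count_nsmul_eq p.parts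

theorem coeff_hanPoly_eq (n t : ℕ) :
    (hanPoly n).coeff t =
      (-1) ^ t * (n.factorial : ℚ) *
        ∑ e : n.Partition,
          (((Mmultiset e.parts).powersetCard t).map fun S =>
            (S.map fun s => ((s : ℚ))⁻¹).prod).sum := by
  classical
  have key : (PowerSeries.coeff n (∏ k ∈ Finset.Icc 1 n, etaFactor k))
      = ∑ e : n.Partition, Qp (Mmultiset e.parts) := by
    rw [PowerSeries.coeff_prod]
    rw [← Finset.sum_filter_of_ne
      (p := fun l : ℕ →₀ ℕ => ∀ k ∈ Finset.Icc 1 n, k ∣ l k)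
      (by
        intro l hl hne k hk
        by_contra hdvd
        exact hne (Finset.prod_eq_zero hk (by rw [coeff_etaFactor, if_neg hdvd])))]
    refine Finset.sum_bij'
      (i := fun l hl => partOf n l
        (by
          have := (Finset.mem_filter.mp hl).1
          exact (Finset.mem_finsuppAntidiag.mp this).1)
        ((Finset.mem_filter.mp hl).2))
      (j := fun p _ => fsOf n p) ?_ ?_ ?_ ?_ ?_
    · intro l hl
      exact Finset.mem_univ _
    · intro p _
      refine Finset.mem_filter.mpr ⟨Finset.mem_finsuppAntidiag.mpr
        ⟨fsOf_sum n p, Finsupp.support_onFinset_subset⟩, ?_⟩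
      intro k _
      exact Dvd.intro _ rfl
    · -- left inverse : fsOf (partOf l) = l
      intro l hl
      have hmem := (Finset.mem_filter.mp hl).1
      have hdvd := (Finset.mem_filter.mp hl).2
      have hsum := (Finset.mem_finsuppAntidiag.mp hmem).1
      have hsupp := (Finset.mem_finsuppAntidiag.mp hmem).2
      ext k
      rw [fsOf_apply, count_partOf]
      by_cases hk : k ∈ Finset.Icc 1 n
      · rw [if_pos hk, Nat.mul_div_cancel' (hdvd k hk)]
      · rw [if_neg hk, mul_zero, eq_comm, ← Finsupp.notMem_support_iff]
        exact fun h => hk (hsupp h)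
    · intro p _
      exact partOf_fsOf n p _ _
    · intro l hl
      have hdvd := (Finset.mem_filter.mp hl).2
      rw [Qp_Mmultiset]
      refine Finset.prod_congr rfl fun k hk => ?_
      rw [coeff_etaFactor, if_pos (hdvd k hk), count_partOf, if_pos hk]
  simp only [castProd_eq]
  rw [hanPoly, Polynomial.coeff_smul, key, Polynomial.finset_sum_coeff]
  simp only [Qp_coeff, smul_eq_mul]
  rw [← Finset.mul_sum]
  ring
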